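/- (Bezdek–Bezdek) Let C be a convex body in ℝ^d and n ≥ 1. Suppose C_1, …, C_n is a division of C obtained by n−1 successive hyperplane cuts: the division is defined recursively, where the trivial division of C is {C}, and a division with k+1 pieces is obtained from a division with k pieces by replacing one piece D by the two pieces D ∩ H⁺ and D ∩ H⁻ for some hyperplane H with bounding closed halfspaces H⁺, H⁻, both new pieces having nonempty interior. Let ρ > 0 be the unique number satisfying width(C^ρ) = 2nρ. Then max_{1 ≤ i ≤ n} I(C_i) ≥ ρ. -/

import Mathlib

open Metric Set
open scoped Classical
open scoped RealInnerProductSpace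

/-- The directional width of a set `K` in direction `v`. -/
noncomputable def dirWidth {d : ℕ} (v : EuclideanSpace ℝ (Fin d))
    (K : Set (EuclideanSpace ℝ (Fin d))) : ℝ :=
  sSup ((fun x => ⟪v, x⟫) '' K) - sInf ((fun x => ⟪v, x⟫) '' K)

/-- The width of `K`: the minimum directional width over all unit directions. -/
noncomputable def setWidth {d : ℕ} (K : Set (EuclideanSpace ℝ (Fin d))) : ℝ :=
  sInf {w | ∃ v : EuclideanSpace ℝ (Fin d), ‖v‖ = 1 ∧ w = dirWidth v K}

/-- The `ρ`-rounded body `C^ρ`: the union of all closed `ρ`-balls contained in `C`. -/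
def rounded {d : ℕ} (C : Set (EuclideanSpace ℝ (Fin d))) (ρ : ℝ) :
    Set (EuclideanSpace ℝ (Fin d)) :=
  {y | ∃ x, closedBall x ρ ⊆ C ∧ y ∈ closedBall x ρ}

/-- The inradius of `K`. -/
noncomputable def inradius {d : ℕ} (K : Set (EuclideanSpace ℝ (Fin d))) : ℝ :=
  sSup {r : ℝ | ∃ x, closedBall x r ⊆ K}

/-- `SuccessiveCuts C L` means the list of pieces `L` is obtained from the convex body `C`
by successive hyperplane cuts: the trivial division is `[C]`, and a division with one more
piece is obtained by replacing one piece `D` by its two intersections with the closed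
halfspaces bounded by a hyperplane `{x : v·x = c}`, both new pieces having
nonempty interior. -/
inductive SuccessiveCuts {d : ℕ} :
    Set (EuclideanSpace ℝ (Fin d)) → List (Set (EuclideanSpace ℝ (Fin d))) → Prop
  | trivial (C : Set (EuclideanSpace ℝ (Fin d))) : SuccessiveCuts C [C]
  | cut (C : Set (EuclideanSpace ℝ (Fin d))) (L : List (Set (EuclideanSpace ℝ (Fin d))))
      (D : Set (EuclideanSpace ℝ (Fin d))) (v : EuclideanSpace ℝ (Fin d)) (c : ℝ)
      (hL : SuccessiveCuts C L) (hD : D ∈ L) (hv : v ≠ 0)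
      (h₁ : (interior (D ∩ {x | ⟪v, x⟫ ≤ c})).Nonempty)
      (h₂ : (interior (D ∩ {x | c ≤ ⟪v, x⟫})).Nonempty) :
      SuccessiveCuts C
        ((L.erase D) ++ [D ∩ {x | ⟪v, x⟫ ≤ c}, D ∩ {x | c ≤ ⟪v, x⟫}])

namespace BezdekBezdekAux

variable {d : ℕ}

local notation "E" => EuclideanSpace ℝ (Fin d)
lemma exists_unit (hd : 0 < d) : ∃ v : E, ‖v‖ = 1 :=
  ⟨EuclideanSpace.single ⟨0, hd⟩ (1:ℝ), by simp [EuclideanSpace.norm_single]⟩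

lemma bddAbove_img (v : E) {K : Set E} (hK : Bornology.IsBounded K) :
    BddAbove ((fun x => ⟪v, x⟫) '' K) := by
  obtain ⟨R, hR⟩ := hK.subset_closedBall 0
  refine ⟨‖v‖ * R, ?_⟩
  rintro w ⟨x, hx, rfl⟩
  have h1 : ‖x‖ ≤ R := by simpa [mem_closedBall, dist_zero_right] using hR hx
  have h2 : ⟪v, x⟫ ≤ ‖v‖ * ‖x‖ := real_inner_le_norm v x
  nlinarith [norm_nonneg v]

lemma bddBelow_img (v : E) {K : Set E} (hK : Bornology.IsBounded K) :
    BddBelow ((fun x => ⟪v, x⟫) '' K) := by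
  obtain ⟨R, hR⟩ := hK.subset_closedBall 0
  refine ⟨-(‖v‖ * R), ?_⟩
  rintro w ⟨x, hx, rfl⟩
  have h1 : ‖x‖ ≤ R := by simpa [mem_closedBall, dist_zero_right] using hR hx
  have h2 : ⟪v, -x⟫ ≤ ‖v‖ * ‖-x‖ := real_inner_le_norm v (-x)
  rw [inner_neg_right, norm_neg] at h2
  nlinarith [norm_nonneg v]

lemma dirWidth_nonneg (v : E) {K : Set E} (hK : Bornology.IsBounded K) :
    0 ≤ dirWidth v K := by
  rcases K.eq_empty_or_nonempty with h | h
  · simp [dirWidth, h, Real.sSup_empty, Real.sInf_empty]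
  · obtain ⟨x, hx⟩ := h
    have h1 : sInf ((fun x => ⟪v, x⟫) '' K) ≤ ⟪v, x⟫ :=
      csInf_le (bddBelow_img v hK) ⟨x, hx, rfl⟩
    have h2 : ⟪v, x⟫ ≤ sSup ((fun x => ⟪v, x⟫) '' K) :=
      le_csSup (bddAbove_img v hK) ⟨x, hx, rfl⟩
    simp only [dirWidth]; linarith

lemma widthSet_bddBelow {K : Set E} (hK : Bornology.IsBounded K) :
    BddBelow {w | ∃ v : E, ‖v‖ = 1 ∧ w = dirWidth v K} := by
  refine ⟨0, ?_⟩; rintro w ⟨v, hv, rfl⟩; exact dirWidth_nonneg v hK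

lemma setWidth_le {K : Set E} (hK : Bornology.IsBounded K) {v : E} (hv : ‖v‖ = 1) :
    setWidth K ≤ dirWidth v K :=
  csInf_le (widthSet_bddBelow hK) ⟨v, hv, rfl⟩

lemma le_setWidth (hd : 0 < d) {K : Set E} {b : ℝ}
    (h : ∀ v : E, ‖v‖ = 1 → b ≤ dirWidth v K) : b ≤ setWidth K := by
  obtain ⟨v, hv⟩ := exists_unit (d := d) hd
  refine le_csInf ⟨_, v, hv, rfl⟩ ?_
  rintro w ⟨v', hv', rfl⟩; exact h v' hv'

lemma setWidth_nonneg (hd : 0 < d) {K : Set E} (hK : Bornology.IsBounded K) :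
    0 ≤ setWidth K := le_setWidth hd fun v _ => dirWidth_nonneg v hK

lemma setWidth_le_bounds {M : Set E} (hMb : Bornology.IsBounded M) (hne : M.Nonempty)
    {u : E} (hu : ‖u‖ = 1) {m₀ m₁ : ℝ} (h₀ : ∀ y ∈ M, m₀ ≤ ⟪u, y⟫)
    (h₁ : ∀ y ∈ M, ⟪u, y⟫ ≤ m₁) :
    setWidth M ≤ m₁ - m₀ := by
  refine (setWidth_le hMb hu).trans ?_
  rw [dirWidth]
  have hS : sSup ((fun x => ⟪u, x⟫) '' M) ≤ m₁ :=
    csSup_le (hne.image _) (by rintro w ⟨x, hx, rfl⟩; exact h₁ x hx)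
  have hI : m₀ ≤ sInf ((fun x => ⟪u, x⟫) '' M) :=
    le_csInf (hne.image _) (by rintro w ⟨x, hx, rfl⟩; exact h₀ x hx)
  linarith

def innerBody (D : Set E) (ρ : ℝ) : Set E := {x | closedBall x ρ ⊆ D}


lemma innerBody_subset {D : Set E} {ρ : ℝ} (hρ : 0 ≤ ρ) : innerBody D ρ ⊆ D :=
  fun _ hx => hx (mem_closedBall_self hρ)

lemma innerBody_convex {D : Set E} {ρ : ℝ} (hD : Convex ℝ D) :
    Convex ℝ (innerBody D ρ) := by
  intro x hx y hy a b ha hb hab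
  intro z hz
  rw [mem_closedBall, dist_eq_norm] at hz
  set w := z - (a • x + b • y) with hwdef
  have hx' : x + w ∈ D := hx (by simpa [mem_closedBall, dist_eq_norm] using hz)
  have hy' : y + w ∈ D := hy (by simpa [mem_closedBall, dist_eq_norm] using hz)
  have hz' : a • (x + w) + b • (y + w) = z := by
    have h1 : a • (x + w) + b • (y + w) = (a • x + b • y) + (a + b) • w := by
      rw [smul_add, smul_add, add_smul]; abel
    rw [h1, hab, one_smul, hwdef]; abel
  rw [← hz']
  exact hD hx' hy' ha hb hab

lemma innerBody_eq_iInter (D : Set E) (ρ : ℝ) :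
    innerBody D ρ = ⋂ w ∈ closedBall (0:E) ρ, (fun x => x + w) ⁻¹' D := by
  ext x
  simp only [innerBody, mem_setOf_eq, mem_iInter, mem_preimage, mem_closedBall]
  constructor
  · intro h w hw
    exact h (by simpa [mem_closedBall, dist_eq_norm] using hw)
  · intro h y hy
    rw [mem_closedBall, dist_eq_norm] at hy
    have := h (y - x) (by simpa [mem_closedBall, dist_eq_norm] using hy)
    simpa using this

lemma innerBody_isClosed {D : Set E} (hD : IsClosed D) (ρ : ℝ) :
    IsClosed (innerBody D ρ) := by
  rw [innerBody_eq_iInter]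
  exact isClosed_biInter fun w _ => hD.preimage (continuous_id.add continuous_const)

lemma innerBody_isCompact {D : Set E} (hD : IsCompact D) {ρ : ℝ} (hρ : 0 ≤ ρ) :
    IsCompact (innerBody D ρ) :=
  hD.of_isClosed_subset (innerBody_isClosed hD.isClosed ρ) (innerBody_subset hρ)

lemma innerBody_halfLe {D : Set E} {u : E} (hu : ‖u‖ = 1) {ρ : ℝ} (hρ : 0 ≤ ρ) (c : ℝ) :
    innerBody (D ∩ {x | ⟪u, x⟫ ≤ c}) ρ = innerBody D ρ ∩ {x | ⟪u, x⟫ ≤ c - ρ} := by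
  have huu : ⟪u, u⟫ = (1:ℝ) := by
    rw [real_inner_self_eq_norm_sq, hu]; norm_num
  ext x
  constructor
  · intro h
    refine ⟨fun y hy => (h hy).1, ?_⟩
    have hmem : x + ρ • u ∈ closedBall x ρ := by
      simp [mem_closedBall, dist_eq_norm, norm_smul, hu, abs_of_nonneg hρ]
    have h2 := (h hmem).2
    simp only [mem_setOf_eq, inner_add_right, real_inner_smul_right, huu] at h2 ⊢
    linarith
  · rintro ⟨h1, h2⟩ y hy
    refine ⟨h1 hy, ?_⟩
    rw [mem_closedBall, dist_eq_norm] at hy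
    have hcs : ⟪u, y - x⟫ ≤ ‖u‖ * ‖y - x‖ := real_inner_le_norm _ _
    rw [hu, one_mul] at hcs
    have h3 : ⟪u, y⟫ = ⟪u, x⟫ + ⟪u, y - x⟫ := by rw [inner_sub_right]; ring
    simp only [mem_setOf_eq] at h2 ⊢
    rw [h3]; linarith

lemma setOf_ge_eq (u : E) (c : ℝ) : {x : E | c ≤ ⟪u, x⟫} = {x : E | ⟪-u, x⟫ ≤ -c} := by
  ext x
  rw [mem_setOf_eq, mem_setOf_eq, inner_neg_left]
  constructor <;> intro <;> linarith

lemma setOf_le_eq_neg (u : E) (s : ℝ) :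
    {x : E | -s ≤ ⟪-u, x⟫} = {x : E | ⟪u, x⟫ ≤ s} := by
  ext x
  rw [mem_setOf_eq, mem_setOf_eq, inner_neg_left]
  constructor <;> intro <;> linarith

lemma innerBody_halfGe {D : Set E} {u : E} (hu : ‖u‖ = 1) {ρ : ℝ} (hρ : 0 ≤ ρ) (c : ℝ) :
    innerBody (D ∩ {x | c ≤ ⟪u, x⟫}) ρ = innerBody D ρ ∩ {x | c + ρ ≤ ⟪u, x⟫} := by
  rw [setOf_ge_eq, innerBody_halfLe (by rw [norm_neg]; exact hu) hρ (-c)]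
  congr 1
  ext x
  rw [mem_setOf_eq, mem_setOf_eq, inner_neg_left]
  constructor <;> intro <;> linarith

lemma inradius_bddAbove (hd : 0 < d) {D : Set E} (hD : Bornology.IsBounded D) :
    BddAbove {r : ℝ | ∃ x : E, closedBall x r ⊆ D} := by
  obtain ⟨R, hR⟩ := hD.subset_closedBall 0
  obtain ⟨v, hv⟩ := exists_unit (d := d) hd
  refine ⟨max 0 (2 * R), ?_⟩
  rintro r ⟨x, hx⟩
  rcases le_or_gt r 0 with h | h
  · exact h.trans (le_max_left _ _)
  · have hx1 : x ∈ closedBall (0:E) R := hR (hx (mem_closedBall_self h.le))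
    have hx2 : x + r • v ∈ closedBall (0:E) R := by
      refine hR (hx ?_)
      simp [mem_closedBall, dist_eq_norm, norm_smul, hv, abs_of_nonneg h.le]
    rw [mem_closedBall, dist_zero_right] at hx1 hx2
    have h3 : r = ‖r • v‖ := by simp [norm_smul, hv, abs_of_nonneg h.le]
    have h4 : ‖(x + r • v) - x‖ ≤ ‖x + r • v‖ + ‖x‖ := norm_sub_le _ _
    have h5 : (x + r • v) - x = r • v := by abel
    rw [h5] at h4
    have : r ≤ 2 * R := by rw [h3]; linarith
    exact this.trans (le_max_right _ _)

lemma le_inradius (hd : 0 < d) {D : Set E} (hD : Bornology.IsBounded D) {x : E} {r : ℝ}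
    (h : closedBall x r ⊆ D) : r ≤ inradius D :=
  le_csSup (inradius_bddAbove hd hD) ⟨x, h⟩

lemma inradius_nonneg (hd : 0 < d) {D : Set E} (hD : Bornology.IsBounded D) :
    0 ≤ inradius D := by
  refine le_of_forall_pos_le_add fun ε hε => ?_
  have h1 : -ε ≤ inradius D := by
    refine le_inradius hd hD (x := 0) ?_
    rw [closedBall_eq_empty.mpr (by linarith)]
    exact empty_subset _
  linarith

lemma exists_ball_of_lt_inradius {D : Set E} {r : ℝ} (h : r < inradius D) :
    ∃ x : E, closedBall x r ⊆ D := by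
  have hne : {r : ℝ | ∃ x : E, closedBall x r ⊆ D}.Nonempty := by
    refine ⟨-1, 0, ?_⟩
    rw [closedBall_eq_empty.mpr (by norm_num)]
    exact empty_subset _
  unfold inradius at h
  obtain ⟨r', ⟨x, hx⟩, hr'⟩ := exists_lt_of_lt_csSup hne h
  exact ⟨x, (closedBall_subset_closedBall hr'.le).trans hx⟩

lemma exists_max {M : Set E} (hM : IsCompact M) (hne : M.Nonempty) (u : E) :
    ∃ x₁ ∈ M, ∀ y ∈ M, ⟪u, y⟫ ≤ ⟪u, x₁⟫ := by
  obtain ⟨x₁, hx₁, hmax⟩ :=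
    hM.exists_isMaxOn (f := fun y => (⟪u, y⟫ : ℝ)) hne
      ((Continuous.inner continuous_const continuous_id).continuousOn)
  exact ⟨x₁, hx₁, fun y hy => hmax hy⟩

lemma exists_min {M : Set E} (hM : IsCompact M) (hne : M.Nonempty) (u : E) :
    ∃ x₀ ∈ M, ∀ y ∈ M, ⟪u, x₀⟫ ≤ ⟪u, y⟫ := by
  obtain ⟨x₀, hx₀, hmin⟩ :=
    hM.exists_isMinOn (f := fun y => (⟪u, y⟫ : ℝ)) hne
      ((Continuous.inner continuous_const continuous_id).continuousOn)
  exact ⟨x₀, hx₀, fun y hy => hmin hy⟩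

/-- Key homothety lemma: chopping a convex set at level `t` keeps at least a
`lam`-fraction of the width, where the homothety centered at the `u`-maximal point
with ratio `lam` maps `M` into `M ∩ {t ≤ ⟪u, ·⟫}`. -/
lemma chop (hd : 0 < d) {M : Set E} (hM : Bornology.IsBounded M) (hconv : Convex ℝ M)
    {u x₁ : E} (hx₁ : x₁ ∈ M) {lam t : ℝ} (h0 : 0 ≤ lam) (h1 : lam ≤ 1)
    (ht : ∀ y ∈ M, t ≤ ⟪u, x₁⟫ - lam * (⟪u, x₁⟫ - ⟪u, y⟫)) :
    lam * setWidth M ≤ setWidth (M ∩ {x | t ≤ ⟪u, x⟫}) := by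
  rcases eq_or_lt_of_le h0 with h0' | hlam
  · rw [← h0', zero_mul]
    exact setWidth_nonneg hd (hM.subset inter_subset_left)
  refine le_setWidth hd fun v hv => ?_
  have key : lam * dirWidth v M ≤ dirWidth v (M ∩ {x | t ≤ ⟪u, x⟫}) := by
    set T := (fun x => ⟪v, x⟫) '' (M ∩ {x | t ≤ ⟪u, x⟫}) with hT
    set S := (fun x => ⟪v, x⟫) '' M with hS
    set c₁ : ℝ := ⟪v, x₁⟫ with hc₁
    have hmem : ∀ x ∈ M,
        ((1 - lam) * c₁ + lam * ⟪v, x⟫) ∈ T := by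
      intro x hx
      refine ⟨(1 - lam) • x₁ + lam • x, ⟨hconv hx₁ hx (by linarith) h0 (by ring), ?_⟩, ?_⟩
      · show t ≤ ⟪u, (1 - lam) • x₁ + lam • x⟫
        have he : ⟪u, (1 - lam) • x₁ + lam • x⟫ = ⟪u, x₁⟫ - lam * (⟪u, x₁⟫ - ⟪u, x⟫) := by
          rw [inner_add_right, real_inner_smul_right, real_inner_smul_right]; ring
        rw [he]; exact ht x hx
      · show ⟪v, (1 - lam) • x₁ + lam • x⟫ = (1 - lam) * c₁ + lam * ⟪v, x⟫
        rw [inner_add_right, real_inner_smul_right, real_inner_smul_right, hc₁]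
    have hTba : BddAbove T := bddAbove_img v (hM.subset inter_subset_left)
    have hTbb : BddBelow T := bddBelow_img v (hM.subset inter_subset_left)
    have hMne : M.Nonempty := ⟨x₁, hx₁⟩
    have h2 : ∀ x ∈ M, (1 - lam) * c₁ + lam * ⟪v, x⟫ ≤ sSup T :=
      fun x hx => le_csSup hTba (hmem x hx)
    have h3 : ∀ x ∈ M, sInf T ≤ (1 - lam) * c₁ + lam * ⟪v, x⟫ :=
      fun x hx => csInf_le hTbb (hmem x hx)
    have hSup : lam * sSup S ≤ sSup T - (1 - lam) * c₁ := by
      have hs : sSup S ≤ (sSup T - (1 - lam) * c₁) / lam := by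
        refine csSup_le (hMne.image _) ?_
        rintro w ⟨x, hx, rfl⟩
        rw [le_div_iff₀ hlam]
        have := h2 x hx; nlinarith
      calc lam * sSup S ≤ lam * ((sSup T - (1 - lam) * c₁) / lam) :=
            mul_le_mul_of_nonneg_left hs h0
        _ = sSup T - (1 - lam) * c₁ := by field_simp
    have hInf : sInf T - (1 - lam) * c₁ ≤ lam * sInf S := by
      have hs : (sInf T - (1 - lam) * c₁) / lam ≤ sInf S := by
        refine le_csInf (hMne.image _) ?_
        rintro w ⟨x, hx, rfl⟩
        rw [div_le_iff₀ hlam]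
        have := h3 x hx; nlinarith
      calc sInf T - (1 - lam) * c₁ = lam * ((sInf T - (1 - lam) * c₁) / lam) := by field_simp
        _ ≤ lam * sInf S := mul_le_mul_of_nonneg_left hs h0
    rw [dirWidth, dirWidth, ← hT, ← hS, mul_sub]
    linarith
  calc lam * setWidth M ≤ lam * dirWidth v M :=
        mul_le_mul_of_nonneg_left (setWidth_le hM hv) h0
    _ ≤ _ := key

lemma halfBall {D : Set E} {u : E} (hu : ‖u‖ = 1) {x : E} {r r' c : ℝ}
    (hx : closedBall x r ⊆ D) (h0 : 0 ≤ r') (h1 : r' ≤ r)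
    (hc : ⟪u, x⟫ + 2 * r' - r ≤ c) :
    closedBall (x - (r - r') • u) r' ⊆ D ∩ {y | ⟪u, y⟫ ≤ c} := by
  have huu : ⟪u, u⟫ = (1:ℝ) := by rw [real_inner_self_eq_norm_sq, hu]; norm_num
  intro y hy
  rw [mem_closedBall, dist_eq_norm] at hy
  set z := x - (r - r') • u with hz
  have hzx : ‖z - x‖ = r - r' := by
    rw [hz]
    have : x - (r - r') • u - x = -((r - r') • u) := by abel
    rw [this, norm_neg, norm_smul, hu, mul_one, Real.norm_eq_abs, abs_of_nonneg (by linarith)]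
  constructor
  · apply hx
    rw [mem_closedBall, dist_eq_norm]
    have hsum : y - x = (y - z) + (z - x) := by abel
    calc ‖y - x‖ ≤ ‖y - z‖ + ‖z - x‖ := by rw [hsum]; exact norm_add_le _ _
      _ ≤ r' + (r - r') := by rw [hzx]; linarith
      _ = r := by ring
  · show ⟪u, y⟫ ≤ c
    have hyz : ⟪u, y - z⟫ ≤ ‖u‖ * ‖y - z‖ := real_inner_le_norm _ _
    rw [hu, one_mul] at hyz
    have hinz : ⟪u, z⟫ = ⟪u, x⟫ - (r - r') := by
      rw [hz, inner_sub_right, real_inner_smul_right, huu, mul_one]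
    have hsplit : ⟪u, y⟫ = ⟪u, z⟫ + ⟪u, y - z⟫ := by
      rw [← inner_add_right]; congr 1; abel
    rw [hsplit, hinz]; linarith

lemma halfBall' {D : Set E} {u : E} (hu : ‖u‖ = 1) {x : E} {r r' c : ℝ}
    (hx : closedBall x r ⊆ D) (h0 : 0 ≤ r') (h1 : r' ≤ r)
    (hc : c ≤ ⟪u, x⟫ - 2 * r' + r) :
    closedBall (x + (r - r') • u) r' ⊆ D ∩ {y | c ≤ ⟪u, y⟫} := by
  have h := halfBall (u := -u) (by rw [norm_neg]; exact hu) hx h0 h1 (c := -c)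
    (by rw [inner_neg_left]; linarith)
  rw [smul_neg, sub_neg_eq_add] at h
  refine h.trans ?_
  rintro y ⟨hy1, hy2⟩
  rw [mem_setOf_eq, inner_neg_left] at hy2
  exact ⟨hy1, by rw [mem_setOf_eq]; linarith⟩

lemma inradius_cut (hd : 0 < d) {D : Set E} (hD : Bornology.IsBounded D) {u : E}
    (hu : ‖u‖ = 1) (c : ℝ) :
    inradius D ≤ inradius (D ∩ {x | ⟪u, x⟫ ≤ c}) + inradius (D ∩ {x | c ≤ ⟪u, x⟫}) := by
  by_contra hcon
  push_neg at hcon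
  obtain ⟨r, h1, h2⟩ := exists_between hcon
  obtain ⟨x, hx⟩ := exists_ball_of_lt_inradius h2
  have hA : Bornology.IsBounded (D ∩ {x | ⟪u, x⟫ ≤ c}) := hD.subset inter_subset_left
  have hB : Bornology.IsBounded (D ∩ {x | c ≤ ⟪u, x⟫}) := hD.subset inter_subset_left
  have hIA := inradius_nonneg hd hA
  have hIB := inradius_nonneg hd hB
  have hr0 : 0 < r := lt_of_le_of_lt (by linarith) h1
  set e := ⟪u, x⟫ with he
  rcases le_or_gt e (c - r) with hcase | hcase
  · have hball := halfBall hu hx hr0.le le_rfl (by linarith : ⟪u, x⟫ + 2 * r - r ≤ c)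
    have := le_inradius hd hA hball
    linarith
  rcases le_or_gt (c + r) e with hcase2 | hcase2
  · have hball := halfBall' hu hx hr0.le le_rfl (by linarith : c ≤ ⟪u, x⟫ - 2 * r + r)
    have := le_inradius hd hB hball
    linarith
  · have hballA := halfBall hu hx (r' := (r + c - e) / 2) (c := c) (by linarith) (by linarith)
      (by rw [← he]; linarith)
    have hballB := halfBall' hu hx (r' := (r - c + e) / 2) (c := c) (by linarith) (by linarith)
      (by rw [← he]; linarith)
    have hA' := le_inradius hd hA hballA
    have hB' := le_inradius hd hB hballB
    linarith


noncomputable def gval (ρ : ℝ) (D : Set E) : ℝ :=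
  if (innerBody D ρ).Nonempty then setWidth (innerBody D ρ) + 2 * ρ else 2 * inradius D

lemma gval_pos {ρ : ℝ} {D : Set E} (h : (innerBody D ρ).Nonempty) :
    gval ρ D = setWidth (innerBody D ρ) + 2 * ρ := if_pos h

lemma gval_neg {ρ : ℝ} {D : Set E} (h : ¬(innerBody D ρ).Nonempty) :
    gval ρ D = 2 * inradius D := if_neg h

/-- Mixed case: the `A`-side has empty inner body, the `B`-side a nonempty one. -/
lemma mixed (hd : 0 < d) {ρ : ℝ} (hρ : 0 < ρ) {D : Set E} (hD : IsCompact D)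
    (hDconv : Convex ℝ D) {u : E} (hu : ‖u‖ = 1) (c : ℝ)
    (hMA : innerBody D ρ ∩ {x | ⟪u, x⟫ ≤ c - ρ} = ∅)
    (hMB : (innerBody D ρ ∩ {x | c + ρ ≤ ⟪u, x⟫}).Nonempty) :
    setWidth (innerBody D ρ) ≤ 2 * inradius (D ∩ {x | ⟪u, x⟫ ≤ c})
      + setWidth (innerBody D ρ ∩ {x | c + ρ ≤ ⟪u, x⟫}) := by
  set M := innerBody D ρ with hM
  have hMcomp : IsCompact M := innerBody_isCompact hD hρ.le
  have hMb := hMcomp.isBounded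
  have hMconv : Convex ℝ M := innerBody_convex hDconv
  obtain ⟨yB, hyB⟩ := hMB
  have hMne : M.Nonempty := ⟨yB, hyB.1⟩
  obtain ⟨x₀, hx₀M, hx₀min⟩ := exists_min hMcomp hMne u
  obtain ⟨x₁, hx₁M, hx₁max⟩ := exists_max hMcomp hMne u
  have hm₀s : c - ρ < ⟪u, x₀⟫ := by
    by_contra h; push_neg at h
    have hmem : x₀ ∈ M ∩ {x | ⟪u, x⟫ ≤ c - ρ} := ⟨hx₀M, h⟩
    rw [hMA] at hmem; simp at hmem
  have hm₁t : c + ρ ≤ ⟪u, x₁⟫ := le_trans hyB.2 (hx₁max yB hyB.1)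
  have hAb : Bornology.IsBounded (D ∩ {x | ⟪u, x⟫ ≤ c}) :=
    hD.isBounded.subset inter_subset_left
  have hwM : setWidth M ≤ ⟪u, x₁⟫ - ⟪u, x₀⟫ := setWidth_le_bounds hMb hMne hu hx₀min hx₁max
  have hwM0 : 0 ≤ setWidth M := setWidth_nonneg hd hMb
  rcases le_or_gt (⟪u, x₀⟫) (c + ρ) with hm₀t | hm₀t
  · have hball := halfBall (D := D) hu (x := x₀) (r := ρ) (r' := (c + ρ - ⟪u, x₀⟫)/2) (c := c)
      hx₀M (by linarith) (by linarith) (by linarith)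
    have hIA : (c + ρ - ⟪u, x₀⟫)/2 ≤ inradius (D ∩ {x | ⟪u, x⟫ ≤ c}) :=
      le_inradius hd hAb hball
    rcases eq_or_lt_of_le (hx₀min x₁ hx₁M) with heq | hlt
    · have hEq : M ∩ {x | c + ρ ≤ ⟪u, x⟫} = M := by
        refine inter_eq_left.mpr fun y hy => ?_
        have h1 := hx₀min y hy
        rw [mem_setOf_eq]
        linarith [heq ▸ hm₁t]
      rw [hEq]; linarith
    · set lam := (⟪u, x₁⟫ - (c + ρ)) / (⟪u, x₁⟫ - ⟪u, x₀⟫) with hlam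
      have hden : 0 < ⟪u, x₁⟫ - ⟪u, x₀⟫ := by linarith
      have h0 : 0 ≤ lam := div_nonneg (by linarith) hden.le
      have h1 : lam ≤ 1 := by rw [hlam, div_le_one hden]; linarith
      have hlamden : lam * (⟪u, x₁⟫ - ⟪u, x₀⟫) = ⟪u, x₁⟫ - (c + ρ) :=
        div_mul_cancel₀ _ hden.ne'
      have hchop := chop hd hMb hMconv hx₁M h0 h1 (t := c + ρ) (fun y hy => by
        have h2 := hx₀min y hy
        have hle : lam * (⟪u, x₁⟫ - ⟪u, y⟫) ≤ lam * (⟪u, x₁⟫ - ⟪u, x₀⟫) :=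
          mul_le_mul_of_nonneg_left (by linarith) h0
        rw [hlamden] at hle; linarith)
      have e1 : (1 - lam) * (⟪u, x₁⟫ - ⟪u, x₀⟫) = (c + ρ) - ⟪u, x₀⟫ := by
        rw [sub_mul, one_mul, hlamden]; ring
      have e2 : (1 - lam) * setWidth M ≤ (1 - lam) * (⟪u, x₁⟫ - ⟪u, x₀⟫) :=
        mul_le_mul_of_nonneg_left hwM (by linarith)
      linarith
  · have hIA0 : 0 ≤ inradius (D ∩ {x | ⟪u, x⟫ ≤ c}) := inradius_nonneg hd hAb
    have hEq : M ∩ {x | c + ρ ≤ ⟪u, x⟫} = M := by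
      refine inter_eq_left.mpr fun y hy => ?_
      have := hx₀min y hy
      rw [mem_setOf_eq]; linarith
    rw [hEq]; linarith

/-- Both sides have empty inner body while `D` has a nonempty one. -/
lemma bothEmpty (hd : 0 < d) {ρ : ℝ} (hρ : 0 < ρ) {D : Set E} (hD : IsCompact D)
    {u : E} (hu : ‖u‖ = 1) (c : ℝ)
    (hMne : (innerBody D ρ).Nonempty)
    (hMA : innerBody D ρ ∩ {x | ⟪u, x⟫ ≤ c - ρ} = ∅)
    (hMB : innerBody D ρ ∩ {x | c + ρ ≤ ⟪u, x⟫} = ∅) :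
    setWidth (innerBody D ρ) + 2 * ρ ≤
      2 * inradius (D ∩ {x | ⟪u, x⟫ ≤ c}) + 2 * inradius (D ∩ {x | c ≤ ⟪u, x⟫}) := by
  set M := innerBody D ρ with hM
  have hMcomp : IsCompact M := innerBody_isCompact hD hρ.le
  have hMb := hMcomp.isBounded
  obtain ⟨x₀, hx₀M, hx₀min⟩ := exists_min hMcomp hMne u
  obtain ⟨x₁, hx₁M, hx₁max⟩ := exists_max hMcomp hMne u
  have h01 : ⟪u, x₀⟫ ≤ ⟪u, x₁⟫ := hx₀min x₁ hx₁M
  have hm₀ : c - ρ < ⟪u, x₀⟫ := by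
    by_contra h; push_neg at h
    have hmem : x₀ ∈ M ∩ {x | ⟪u, x⟫ ≤ c - ρ} := ⟨hx₀M, h⟩
    rw [hMA] at hmem; simp at hmem
  have hm₁ : ⟪u, x₁⟫ < c + ρ := by
    by_contra h; push_neg at h
    have hmem : x₁ ∈ M ∩ {x | c + ρ ≤ ⟪u, x⟫} := ⟨hx₁M, h⟩
    rw [hMB] at hmem; simp at hmem
  have hAb : Bornology.IsBounded (D ∩ {x | ⟪u, x⟫ ≤ c}) :=
    hD.isBounded.subset inter_subset_left
  have hBb : Bornology.IsBounded (D ∩ {x | c ≤ ⟪u, x⟫}) :=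
    hD.isBounded.subset inter_subset_left
  have hballA := halfBall (D := D) hu (x := x₀) (r := ρ) (r' := (c + ρ - ⟪u, x₀⟫)/2) (c := c)
    hx₀M (by linarith) (by linarith) (by linarith)
  have hballB := halfBall' (D := D) hu (x := x₁) (r := ρ) (r' := (⟪u, x₁⟫ - (c - ρ))/2) (c := c)
    hx₁M (by linarith) (by linarith) (by linarith)
  have hIA := le_inradius hd hAb hballA
  have hIB := le_inradius hd hBb hballB
  have hwM : setWidth M ≤ ⟪u, x₁⟫ - ⟪u, x₀⟫ := setWidth_le_bounds hMb hMne hu hx₀min hx₁max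
  linarith

/-- Both sides have nonempty inner bodies. -/
lemma bothNe (hd : 0 < d) {ρ : ℝ} (hρ : 0 < ρ) {D : Set E} (hD : IsCompact D)
    (hDconv : Convex ℝ D) {u : E} (hu : ‖u‖ = 1) (c : ℝ)
    (hMA : (innerBody D ρ ∩ {x | ⟪u, x⟫ ≤ c - ρ}).Nonempty)
    (hMB : (innerBody D ρ ∩ {x | c + ρ ≤ ⟪u, x⟫}).Nonempty) :
    setWidth (innerBody D ρ) - 2 * ρ ≤
      setWidth (innerBody D ρ ∩ {x | ⟪u, x⟫ ≤ c - ρ}) +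
      setWidth (innerBody D ρ ∩ {x | c + ρ ≤ ⟪u, x⟫}) := by
  set M := innerBody D ρ with hM
  have hMcomp : IsCompact M := innerBody_isCompact hD hρ.le
  have hMb := hMcomp.isBounded
  have hMconv : Convex ℝ M := innerBody_convex hDconv
  obtain ⟨yA, hyA⟩ := hMA
  obtain ⟨yB, hyB⟩ := hMB
  have hMne : M.Nonempty := ⟨yA, hyA.1⟩
  obtain ⟨x₀, hx₀M, hx₀min⟩ := exists_min hMcomp hMne u
  obtain ⟨x₁, hx₁M, hx₁max⟩ := exists_max hMcomp hMne u
  have hm₀ : ⟪u, x₀⟫ ≤ c - ρ := le_trans (hx₀min yA hyA.1) hyA.2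
  have hm₁ : c + ρ ≤ ⟪u, x₁⟫ := le_trans hyB.2 (hx₁max yB hyB.1)
  have hden : 0 < ⟪u, x₁⟫ - ⟪u, x₀⟫ := by linarith
  have hwM : setWidth M ≤ ⟪u, x₁⟫ - ⟪u, x₀⟫ := setWidth_le_bounds hMb hMne hu hx₀min hx₁max
  have hwM0 : 0 ≤ setWidth M := setWidth_nonneg hd hMb
  set lam₁ := (⟪u, x₁⟫ - (c + ρ)) / (⟪u, x₁⟫ - ⟪u, x₀⟫) with hlam₁
  set lam₂ := ((c - ρ) - ⟪u, x₀⟫) / (⟪u, x₁⟫ - ⟪u, x₀⟫) with hlam₂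
  have h0₁ : 0 ≤ lam₁ := div_nonneg (by linarith) hden.le
  have h1₁ : lam₁ ≤ 1 := by rw [hlam₁, div_le_one hden]; linarith
  have h0₂ : 0 ≤ lam₂ := div_nonneg (by linarith) hden.le
  have h1₂ : lam₂ ≤ 1 := by rw [hlam₂, div_le_one hden]; linarith
  have e1 : lam₁ * (⟪u, x₁⟫ - ⟪u, x₀⟫) = ⟪u, x₁⟫ - (c + ρ) := div_mul_cancel₀ _ hden.ne'
  have e2 : lam₂ * (⟪u, x₁⟫ - ⟪u, x₀⟫) = (c - ρ) - ⟪u, x₀⟫ := div_mul_cancel₀ _ hden.ne'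
  have hchopB := chop hd hMb hMconv hx₁M h0₁ h1₁ (t := c + ρ) (fun y hy => by
    have h2 := hx₀min y hy
    have hle : lam₁ * (⟪u, x₁⟫ - ⟪u, y⟫) ≤ lam₁ * (⟪u, x₁⟫ - ⟪u, x₀⟫) :=
      mul_le_mul_of_nonneg_left (by linarith) h0₁
    rw [e1] at hle; linarith)
  have hchopA' := chop hd hMb hMconv (u := -u) hx₀M h0₂ h1₂ (t := -(c - ρ)) (fun y hy => by
    rw [inner_neg_left, inner_neg_left]
    have h2 := hx₁max y hy
    have hle : lam₂ * (⟪u, y⟫ - ⟪u, x₀⟫) ≤ lam₂ * (⟪u, x₁⟫ - ⟪u, x₀⟫) :=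
      mul_le_mul_of_nonneg_left (by linarith) h0₂
    rw [e2] at hle; linarith)
  rw [setOf_le_eq_neg u (c - ρ)] at hchopA'
  have e4 : (1 - lam₁ - lam₂) * (⟪u, x₁⟫ - ⟪u, x₀⟫) = 2 * ρ := by
    rw [sub_mul, sub_mul, one_mul, e1, e2]; ring
  have h1l : 0 ≤ 1 - lam₁ - lam₂ := by nlinarith [e4, hden, hρ]
  have e3 : (1 - lam₁ - lam₂) * setWidth M ≤ (1 - lam₁ - lam₂) * (⟪u, x₁⟫ - ⟪u, x₀⟫) :=
    mul_le_mul_of_nonneg_left hwM h1l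
  linarith

/-- The key cut inequality: `gval` is superadditive under a hyperplane cut. -/
lemma gval_cut (hd : 0 < d) {ρ : ℝ} (hρ : 0 < ρ) {D : Set E} (hD : IsCompact D)
    (hDconv : Convex ℝ D) {u : E} (hu : ‖u‖ = 1) (c : ℝ) :
    gval ρ D ≤ gval ρ (D ∩ {x | ⟪u, x⟫ ≤ c}) + gval ρ (D ∩ {x | c ≤ ⟪u, x⟫}) := by
  have eA := innerBody_halfLe (D := D) hu hρ.le c
  have eB := innerBody_halfGe (D := D) hu hρ.le c
  have hsetB : {x : E | ⟪-u, x⟫ ≤ -c} = {x : E | c ≤ ⟪u, x⟫} := by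
    ext x; rw [mem_setOf_eq, mem_setOf_eq, inner_neg_left]
    constructor <;> intro <;> linarith
  have hsetB' : {x : E | ⟪-u, x⟫ ≤ -c - ρ} = {x : E | c + ρ ≤ ⟪u, x⟫} := by
    ext x; rw [mem_setOf_eq, mem_setOf_eq, inner_neg_left]
    constructor <;> intro <;> linarith
  have hsetA' : {x : E | -c + ρ ≤ ⟪-u, x⟫} = {x : E | ⟪u, x⟫ ≤ c - ρ} := by
    ext x; rw [mem_setOf_eq, mem_setOf_eq, inner_neg_left]
    constructor <;> intro <;> linarith
  by_cases hM : (innerBody D ρ).Nonempty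
  · by_cases hA : (innerBody D ρ ∩ {x | ⟪u, x⟫ ≤ c - ρ}).Nonempty
    · by_cases hB : (innerBody D ρ ∩ {x | c + ρ ≤ ⟪u, x⟫}).Nonempty
      · rw [gval_pos hM, gval_pos (by rw [eA]; exact hA), gval_pos (by rw [eB]; exact hB),
          eA, eB]
        have h := bothNe hd hρ hD hDconv hu c hA hB
        linarith
      · rw [gval_pos hM, gval_pos (by rw [eA]; exact hA), gval_neg (by rw [eB]; exact hB), eA]
        have hMA' : innerBody D ρ ∩ {x | ⟪-u, x⟫ ≤ -c - ρ} = ∅ := by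
          rw [hsetB']; exact not_nonempty_iff_eq_empty.mp hB
        have hMB' : (innerBody D ρ ∩ {x | -c + ρ ≤ ⟪-u, x⟫}).Nonempty := by
          rw [hsetA']; exact hA
        have h := mixed hd hρ hD hDconv (u := -u) (by rw [norm_neg]; exact hu) (-c) hMA' hMB'
        rw [hsetB, hsetA'] at h
        linarith
    · by_cases hB : (innerBody D ρ ∩ {x | c + ρ ≤ ⟪u, x⟫}).Nonempty
      · rw [gval_pos hM, gval_neg (by rw [eA]; exact hA), gval_pos (by rw [eB]; exact hB), eB]
        have h := mixed hd hρ hD hDconv hu c (not_nonempty_iff_eq_empty.mp hA) hB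
        linarith
      · rw [gval_pos hM, gval_neg (by rw [eA]; exact hA), gval_neg (by rw [eB]; exact hB)]
        have h := bothEmpty hd hρ hD hu c hM (not_nonempty_iff_eq_empty.mp hA)
          (not_nonempty_iff_eq_empty.mp hB)
        linarith
  · have hA : ¬(innerBody (D ∩ {x | ⟪u, x⟫ ≤ c}) ρ).Nonempty := by
      rw [eA]; rintro ⟨x, hx⟩; exact hM ⟨x, hx.1⟩
    have hB : ¬(innerBody (D ∩ {x | c ≤ ⟪u, x⟫}) ρ).Nonempty := by
      rw [eB]; rintro ⟨x, hx⟩; exact hM ⟨x, hx.1⟩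
    rw [gval_neg hM, gval_neg hA, gval_neg hB]
    have h := inradius_cut hd hD.isBounded hu c
    linarith

lemma convex_halfLe (v : E) (c : ℝ) : Convex ℝ {x : E | ⟪v, x⟫ ≤ c} := by
  intro x hx y hy a b ha hb hab
  rw [mem_setOf_eq] at hx hy ⊢
  rw [inner_add_right, real_inner_smul_right, real_inner_smul_right]
  calc a * ⟪v, x⟫ + b * ⟪v, y⟫ ≤ a * c + b * c :=
        add_le_add (mul_le_mul_of_nonneg_left hx ha) (mul_le_mul_of_nonneg_left hy hb)
    _ = c := by rw [← add_mul, hab, one_mul]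

lemma convex_halfGe (v : E) (c : ℝ) : Convex ℝ {x : E | c ≤ ⟪v, x⟫} := by
  intro x hx y hy a b ha hb hab
  rw [mem_setOf_eq] at hx hy ⊢
  rw [inner_add_right, real_inner_smul_right, real_inner_smul_right]
  calc c = a * c + b * c := by rw [← add_mul, hab, one_mul]
    _ ≤ a * ⟪v, x⟫ + b * ⟪v, y⟫ :=
        add_le_add (mul_le_mul_of_nonneg_left hx ha) (mul_le_mul_of_nonneg_left hy hb)

lemma closed_halfLe (v : E) (c : ℝ) : IsClosed {x : E | ⟪v, x⟫ ≤ c} :=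
  isClosed_le (Continuous.inner continuous_const continuous_id) continuous_const

lemma closed_halfGe (v : E) (c : ℝ) : IsClosed {x : E | c ≤ ⟪v, x⟫} :=
  isClosed_le continuous_const (Continuous.inner continuous_const continuous_id)

lemma invariant (hd : 0 < d) {ρ : ℝ} (hρ : 0 < ρ) {C : Set E} {L : List (Set E)}
    (h : SuccessiveCuts C L) :
    IsCompact C → Convex ℝ C →
      (∀ D ∈ L, IsCompact D ∧ Convex ℝ D) ∧ gval ρ C ≤ (L.map (gval ρ)).sum := by
  induction h with
  | trivial =>
    intro hC hCc
    refine ⟨?_, by simp⟩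
    intro D hD
    rw [List.mem_singleton] at hD
    rw [hD]; exact ⟨hC, hCc⟩
  | cut L₀ D v c hL hDmem hv h₁ h₂ ih =>
    intro hC hCc
    obtain ⟨hfacts, hsum⟩ := ih hC hCc
    obtain ⟨hDcomp, hDconv⟩ := hfacts D hDmem
    have hvpos : (0:ℝ) < ‖v‖ := norm_pos_iff.mpr hv
    have hu : ‖(‖v‖⁻¹ • v : E)‖ = 1 := by
      rw [norm_smul, norm_inv, norm_norm, inv_mul_cancel₀ hvpos.ne']
    have hsetA : {x : E | ⟪v, x⟫ ≤ c} = {x : E | ⟪‖v‖⁻¹ • v, x⟫ ≤ c / ‖v‖} := by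
      ext x
      rw [mem_setOf_eq, mem_setOf_eq, real_inner_smul_left, div_eq_inv_mul,
        mul_le_mul_iff_right₀ (inv_pos.mpr hvpos)]
    have hsetB : {x : E | c ≤ ⟪v, x⟫} = {x : E | c / ‖v‖ ≤ ⟪‖v‖⁻¹ • v, x⟫} := by
      ext x
      rw [mem_setOf_eq, mem_setOf_eq, real_inner_smul_left, div_eq_inv_mul,
        mul_le_mul_iff_right₀ (inv_pos.mpr hvpos)]
    have key := gval_cut hd hρ hDcomp hDconv (u := ‖v‖⁻¹ • v) hu (c / ‖v‖)
    rw [← hsetA, ← hsetB] at key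
    have hAcomp : IsCompact (D ∩ {x | ⟪v, x⟫ ≤ c}) := hDcomp.inter_right (closed_halfLe v c)
    have hAconv : Convex ℝ (D ∩ {x | ⟪v, x⟫ ≤ c}) := hDconv.inter (convex_halfLe v c)
    have hBcomp : IsCompact (D ∩ {x | c ≤ ⟪v, x⟫}) := hDcomp.inter_right (closed_halfGe v c)
    have hBconv : Convex ℝ (D ∩ {x | c ≤ ⟪v, x⟫}) := hDconv.inter (convex_halfGe v c)
    constructor
    · intro D' hD'
      rw [List.mem_append] at hD'
      rcases hD' with hmem | hmem
      · exact hfacts D' (List.mem_of_mem_erase hmem)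
      · rw [List.mem_cons, List.mem_singleton] at hmem
        rcases hmem with hmem | hmem
        · rw [hmem]; exact ⟨hAcomp, hAconv⟩
        · rw [hmem]; exact ⟨hBcomp, hBconv⟩
    · have hperm : (List.map (gval ρ) L₀).sum
          = gval ρ D + (List.map (gval ρ) (L₀.erase D)).sum := by
        have hp := (List.perm_cons_erase hDmem).map (gval ρ)
        rw [hp.sum_eq, List.map_cons, List.sum_cons]
      rw [List.map_append, List.sum_append]
      simp only [List.map_cons, List.map_nil, List.sum_cons, List.sum_nil]
      rw [hperm] at hsum
      linarith

lemma rounded_subset {C : Set E} {ρ : ℝ} : rounded C ρ ⊆ C := by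
  rintro y ⟨x, hx, hy⟩; exact hx hy

lemma dirWidth_rounded_le {C : Set E} (hC : Bornology.IsBounded C) {ρ : ℝ} (hρ : 0 ≤ ρ)
    (hne : (innerBody C ρ).Nonempty) {v : E} (hv : ‖v‖ = 1) :
    dirWidth v (rounded C ρ) ≤ dirWidth v (innerBody C ρ) + 2 * ρ := by
  have hMb : Bornology.IsBounded (innerBody C ρ) := hC.subset (innerBody_subset hρ)
  have hRne : (rounded C ρ).Nonempty := by
    obtain ⟨x, hx⟩ := hne
    exact ⟨x, x, hx, mem_closedBall_self hρ⟩
  have hS : sSup ((fun x => ⟪v, x⟫) '' rounded C ρ)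
      ≤ sSup ((fun x => ⟪v, x⟫) '' innerBody C ρ) + ρ := by
    refine csSup_le (hRne.image _) ?_
    rintro w ⟨y, ⟨x, hx, hy⟩, rfl⟩
    show ⟪v, y⟫ ≤ sSup ((fun x => ⟪v, x⟫) '' innerBody C ρ) + ρ
    have h1 : ⟪v, x⟫ ≤ sSup ((fun x => ⟪v, x⟫) '' innerBody C ρ) :=
      le_csSup (bddAbove_img v hMb) ⟨x, hx, rfl⟩
    have h2 : ⟪v, y - x⟫ ≤ ‖v‖ * ‖y - x‖ := real_inner_le_norm _ _
    rw [hv, one_mul] at h2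
    rw [mem_closedBall, dist_eq_norm] at hy
    have h3 : ⟪v, y⟫ = ⟪v, x⟫ + ⟪v, y - x⟫ := by
      rw [← inner_add_right]; congr 1; abel
    rw [h3]; linarith
  have hI : sInf ((fun x => ⟪v, x⟫) '' innerBody C ρ) - ρ
      ≤ sInf ((fun x => ⟪v, x⟫) '' rounded C ρ) := by
    refine le_csInf (hRne.image _) ?_
    rintro w ⟨y, ⟨x, hx, hy⟩, rfl⟩
    show sInf ((fun x => ⟪v, x⟫) '' innerBody C ρ) - ρ ≤ ⟪v, y⟫
    have h1 : sInf ((fun x => ⟪v, x⟫) '' innerBody C ρ) ≤ ⟪v, x⟫ :=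
      csInf_le (bddBelow_img v hMb) ⟨x, hx, rfl⟩
    have h2 : ⟪v, x - y⟫ ≤ ‖v‖ * ‖x - y‖ := real_inner_le_norm _ _
    rw [hv, one_mul] at h2
    rw [mem_closedBall, dist_eq_norm] at hy
    have hxy : ‖x - y‖ ≤ ρ := by rw [norm_sub_rev]; exact hy
    have h3 : ⟪v, y⟫ = ⟪v, x⟫ - ⟪v, x - y⟫ := by
      rw [inner_sub_right]; ring
    rw [h3]; linarith
  rw [dirWidth, dirWidth]; linarith

lemma norm_eq_zero_of_dim_zero (hd : d = 0) (v : E) : ‖v‖ = 0 := by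
  subst hd
  rw [EuclideanSpace.norm_eq]
  simp

end BezdekBezdekAux

open BezdekBezdekAux

/-- (Bezdek–Bezdek) If a convex body `C ⊆ ℝ^d` is divided into `n` pieces by `n − 1`
successive hyperplane cuts, and `ρ > 0` satisfies `width (C^ρ) = 2nρ`, then some piece has
inradius at least `ρ`. -/
theorem bezdek_bezdek {d : ℕ} (C : Set (EuclideanSpace ℝ (Fin d)))
    (hcomp : IsCompact C) (hconv : Convex ℝ C) (hint : (interior C).Nonempty)
    (n : ℕ) (hn : 1 ≤ n)
    (L : List (Set (EuclideanSpace ℝ (Fin d)))) (hL : SuccessiveCuts C L)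
    (hlen : L.length = n)
    (ρ : ℝ) (hρ : 0 < ρ) (hwidth : setWidth (rounded C ρ) = 2 * n * ρ) :
    ∃ D ∈ L, ρ ≤ inradius D := by
  have hn1 : (1:ℝ) ≤ (n:ℝ) := by exact_mod_cast hn
  have hd : 0 < d := by
    rcases Nat.eq_zero_or_pos d with hd0 | hd0
    · exfalso
      have h1 : ∀ v : EuclideanSpace ℝ (Fin d), ‖v‖ ≠ 1 := by
        intro v
        rw [norm_eq_zero_of_dim_zero hd0 v]
        norm_num
      have hset : {w | ∃ v : EuclideanSpace ℝ (Fin d),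
          ‖v‖ = 1 ∧ w = dirWidth v (rounded C ρ)} = ∅ :=
        eq_empty_iff_forall_notMem.mpr (fun w ⟨v, hv, _⟩ => h1 v hv)
      rw [setWidth, hset, Real.sInf_empty] at hwidth
      nlinarith
    · exact hd0
  obtain ⟨hpieces, hsum⟩ := invariant hd hρ hL hcomp hconv
  by_contra hcon
  push_neg at hcon
  have hMC : (innerBody C ρ).Nonempty := by
    by_contra hne
    have hrounded : rounded C ρ = ∅ := by
      rw [eq_empty_iff_forall_notMem]
      rintro y ⟨x, hx, hy⟩
      exact hne ⟨x, hx⟩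
    have hzero : setWidth (rounded C ρ) = 0 := by
      obtain ⟨v₀, hv₀⟩ := exists_unit hd
      have hdir : ∀ v : EuclideanSpace ℝ (Fin d), dirWidth v (rounded C ρ) = 0 := by
        intro v; rw [hrounded]; simp [dirWidth, Real.sSup_empty, Real.sInf_empty]
      have hset : {w | ∃ v : EuclideanSpace ℝ (Fin d),
          ‖v‖ = 1 ∧ w = dirWidth v (rounded C ρ)} = {0} := by
        ext w
        simp only [mem_setOf_eq, mem_singleton_iff]
        constructor
        · rintro ⟨v, hv, rfl⟩; exact hdir v
        · rintro rfl; exact ⟨v₀, hv₀, (hdir v₀).symm⟩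
      rw [setWidth, hset, csInf_singleton]
    rw [hwidth] at hzero
    nlinarith
  have hgC : 2 * n * ρ ≤ gval ρ C := by
    rw [gval_pos hMC]
    have key : ∀ v : EuclideanSpace ℝ (Fin d), ‖v‖ = 1 →
        2 * n * ρ - 2 * ρ ≤ dirWidth v (innerBody C ρ) := by
      intro v hv
      have h1 : setWidth (rounded C ρ) ≤ dirWidth v (rounded C ρ) :=
        setWidth_le (hcomp.isBounded.subset rounded_subset) hv
      have h2 := dirWidth_rounded_le hcomp.isBounded hρ.le hMC hv
      rw [hwidth] at h1
      linarith
    have := le_setWidth hd key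
    linarith
  have hlt : ∀ D ∈ L, gval ρ D < 2 * ρ := by
    intro D hDL
    have hDb := (hpieces D hDL).1.isBounded
    have hEmpty : ¬(innerBody D ρ).Nonempty := by
      rintro ⟨x, hx⟩
      exact absurd (le_inradius hd hDb hx) (not_le.mpr (hcon D hDL))
    rw [gval_neg hEmpty]
    linarith [hcon D hDL]
  have hLne : L ≠ [] := by
    intro h; rw [h] at hlen; simp at hlen; omega
  obtain ⟨D₀, hD₀⟩ := List.exists_mem_of_ne_nil L hLne
  have hstrict : (L.map (gval ρ)).sum
      < (L.map (fun _ : Set (EuclideanSpace ℝ (Fin d)) => 2 * ρ)).sum :=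
    List.sum_lt_sum _ _ (fun D hD => (hlt D hD).le) ⟨D₀, hD₀, hlt D₀ hD₀⟩
  have hconst : (L.map (fun _ : Set (EuclideanSpace ℝ (Fin d)) => 2 * ρ)).sum
      = n * (2 * ρ) := by
    rw [List.map_const', List.sum_replicate, hlen, nsmul_eq_mul]
  have hring : (n:ℝ) * (2 * ρ) = 2 * n * ρ := by ring
  linarith
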